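/- Let n = m + k with m odd and k even positive. Let w ∈ W(D_n) act on {1,…,k} with an even number of negative cycles, all of even length, and as a single positive m-cycle on {k+1,…,n}. Then every involution in the centralizer C_{W(D_n)}(w) lies in the subgroup of block-diagonal elements diag(A,B) with A ∈ W(D_k); consequently the subgroup C_{W(D_n)}(w) ∩ (W(D_k) × S_m-part) of index 2 has no complement in C_{W(D_n)}(w). -/

import Mathlib

/-- The negation map on the points of `W(B_n)`. -/
def negP {n : ℕ} : Equiv.Perm (Fin n × ZMod 2) :=
  Equiv.prodCongr (Equiv.refl (Fin n)) (Equiv.addRight (1 : ZMod 2))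

/-- Membership in `W(D_n)`: a signed permutation (a permutation of `Fin n × ZMod 2`
commuting with negation) with an even number of sign changes. -/
def inDn {n : ℕ} (u : Equiv.Perm (Fin n × ZMod 2)) : Prop :=
  (∀ p, u (negP p) = negP (u p)) ∧
    Even (Nat.card {i : Fin n // (u (i, (0 : ZMod 2))).2 = 1})

/-- Block-diagonality `diag(A,B)` with respect to the first `k` points, with the
`A`-block lying in `W(D_k)` (an even number of sign changes among the first `k` points). -/
def blockDk {n : ℕ} (k : ℕ) (u : Equiv.Perm (Fin n × ZMod 2)) : Prop :=
  (∀ (i : Fin n) (s : ZMod 2), (i : ℕ) < k → ((u (i, s)).1 : ℕ) < k) ∧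
    Even (Nat.card {i : Fin n // (i : ℕ) < k ∧ (u (i, (0 : ZMod 2))).2 = 1})

namespace S14
open Equiv Equiv.Perm Function Finset

variable {n k : ℕ}

lemma zcases (s : ZMod 2) : s = 0 ∨ s = 1 := by revert s; decide

lemma negP_apply (p : Fin n × ZMod 2) : (negP p) = (p.1, p.2 + 1) := rfl

lemma add11 (s : ZMod 2) : s + 1 + 1 = s := by revert s; decide

lemma negP_negP (p : Fin n × ZMod 2) : negP (negP p) = p := by
  simp [negP_apply, add11]

lemma negP_ne (p : Fin n × ZMod 2) : negP p ≠ p := by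
  simp only [negP_apply, ne_eq, Prod.mk.injEq, not_and]
  have : p.2 + 1 ≠ p.2 := by
    rcases zcases p.2 with h | h <;> rw [h] <;> decide
  intro h
  exact this (congrArg Prod.snd h)

/-- commuting with negation, pointwise form -/
def C1 (u : Equiv.Perm (Fin n × ZMod 2)) : Prop := ∀ p, u (negP p) = negP (u p)

lemma C1.mul {u v : Equiv.Perm (Fin n × ZMod 2)} (hu : C1 u) (hv : C1 v) : C1 (u * v) := by
  intro p; simp [Equiv.Perm.mul_apply, hv p, hu (v p)]

lemma C1.inv {u : Equiv.Perm (Fin n × ZMod 2)} (hu : C1 u) : C1 u⁻¹ := by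
  intro p
  apply u.injective
  rw [(show ∀ x, u (u⁻¹ x) = x from fun x => Equiv.apply_symm_apply u x), hu (u⁻¹ p), (show ∀ x, u (u⁻¹ x) = x from fun x => Equiv.apply_symm_apply u x)]

lemma C1.one : C1 (1 : Equiv.Perm (Fin n × ZMod 2)) := fun p => rfl

lemma C1.pow {u : Equiv.Perm (Fin n × ZMod 2)} (hu : C1 u) (t : ℕ) : C1 (u ^ t) := by
  induction t with
  | zero => exact C1.one
  | succ t ih => rw [pow_succ]; exact ih.mul hu

lemma C1.zpow {u : Equiv.Perm (Fin n × ZMod 2)} (hu : C1 u) (a : ℤ) : C1 (u ^ a) := by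
  cases a with
  | ofNat t => exact_mod_cast hu.pow t
  | negSucc t => rw [zpow_negSucc]; exact (hu.pow (t+1)).inv

lemma C1.apply_snd {u : Equiv.Perm (Fin n × ZMod 2)} (hu : C1 u) (i : Fin n) (s : ZMod 2) :
    u (i, s) = ((u (i, 0)).1, (u (i, 0)).2 + s) := by
  rcases zcases s with h | h <;> subst h
  · simp
  · have := hu (i, 0)
    rw [negP_apply] at this
    simpa [negP_apply] using this


/-- block preservation (both directions) -/
def PresB (k : ℕ) (u : Equiv.Perm (Fin n × ZMod 2)) : Prop :=
  ∀ p : Fin n × ZMod 2, ((u p).1 : ℕ) < k ↔ ((p.1 : ℕ) < k)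

lemma presB_of_into {u : Equiv.Perm (Fin n × ZMod 2)}
    (h : ∀ p : Fin n × ZMod 2, ((p.1 : ℕ) < k) → ((u p).1 : ℕ) < k) : PresB k u := by
  classical
  set F : Finset (Fin n × ZMod 2) := univ.filter (fun p => ((p.1 : ℕ) < k)) with hF
  have himg : F.image u = F := by
    apply Finset.eq_of_subset_of_card_le
    · intro q hq
      simp only [hF, Finset.mem_image, Finset.mem_filter, Finset.mem_univ, true_and] at hq ⊢
      obtain ⟨p, hp, rfl⟩ := hq
      exact h p hp
    · rw [Finset.card_image_of_injective _ u.injective]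
  intro p
  constructor
  · intro hup
    have : u p ∈ F := by simp [hF, hup]
    rw [← himg] at this
    simp only [Finset.mem_image] at this
    obtain ⟨q, hq, hqe⟩ := this
    have : q = p := u.injective hqe
    subst this
    simpa [hF] using hq
  · intro hp
    exact h p hp

lemma PresB.mul {u v : Equiv.Perm (Fin n × ZMod 2)} (hu : PresB k u) (hv : PresB k v) :
    PresB k (u * v) := fun p => (hu (v p)).trans (hv p)

lemma PresB.inv {u : Equiv.Perm (Fin n × ZMod 2)} (hu : PresB k u) : PresB k u⁻¹ := by
  intro p
  have := hu (u⁻¹ p)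
  rw [(show ∀ x, u (u⁻¹ x) = x from fun x => Equiv.apply_symm_apply u x)] at this
  exact this.symm

lemma PresB.one : PresB k (1 : Equiv.Perm (Fin n × ZMod 2)) := fun _ => Iff.rfl

lemma PresB.pow {u : Equiv.Perm (Fin n × ZMod 2)} (hu : PresB k u) (t : ℕ) : PresB k (u ^ t) := by
  induction t with
  | zero => exact PresB.one
  | succ t ih => rw [pow_succ]; exact ih.mul hu

lemma PresB.zpow {u : Equiv.Perm (Fin n × ZMod 2)} (hu : PresB k u) (a : ℤ) : PresB k (u ^ a) := by
  cases a with
  | ofNat t => exact_mod_cast hu.pow t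
  | negSucc t => rw [zpow_negSucc]; exact (hu.pow (t+1)).inv

lemma PresB.sameCycle {w : Equiv.Perm (Fin n × ZMod 2)} (hw : PresB k w)
    {p q : Fin n × ZMod 2} (h : w.SameCycle p q) : (((p.1 : ℕ) < k) ↔ ((q.1 : ℕ) < k)) := by
  obtain ⟨a, ha⟩ := h
  rw [← ha]
  exact (hw.zpow a p).symm

/-- conjugation of cycleOf by a commuting element -/
lemma cycleOf_comm {w u : Equiv.Perm (Fin n × ZMod 2)} (hcw : w * u = u * w)
    (p : Fin n × ZMod 2) : w.cycleOf (u p) = u * w.cycleOf p * u⁻¹ := by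
  classical
  have hconj : u * w * u⁻¹ = w := by
    rw [hcw.symm]; group
  apply Equiv.ext; intro q
  have hsc : w.SameCycle (u p) q ↔ w.SameCycle p (u⁻¹ q) := by
    conv_lhs => rw [← hconj]
    rw [Equiv.Perm.sameCycle_conj]
    simp
  rw [Equiv.Perm.cycleOf_apply]
  simp only [Equiv.Perm.mul_apply, Equiv.Perm.cycleOf_apply]
  by_cases h : w.SameCycle p (u⁻¹ q)
  · rw [if_pos (hsc.mpr h), if_pos h]
    have : u (w (u⁻¹ q)) = (u * w * u⁻¹) q := rfl
    rw [this, hconj]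
  · rw [if_neg (fun hh => h (hsc.mp hh)), if_neg h]
    simp


def ek (k : ℕ) (u : Equiv.Perm (Fin n × ZMod 2)) : ZMod 2 :=
  ∑ i ∈ univ.filter (fun i : Fin n => (i : ℕ) < k), (u (i, 0)).2

def et (u : Equiv.Perm (Fin n × ZMod 2)) : ZMod 2 :=
  ∑ i : Fin n, (u (i, 0)).2

lemma sum_snd_eq_card (u : Equiv.Perm (Fin n × ZMod 2)) (s : Finset (Fin n)) :
    ∑ i ∈ s, (u (i, 0)).2 = ((s.filter (fun i => (u (i, 0)).2 = 1)).card : ZMod 2) := by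
  classical
  rw [← Finset.sum_boole]
  apply Finset.sum_congr rfl
  intro i _
  rcases zcases ((u (i, 0)).2) with h | h <;> rw [h] <;> simp

lemma even_iff_cast_zero (a : ℕ) : Even a ↔ ((a : ZMod 2) = 0) := by
  rw [ZMod.natCast_eq_zero_iff]
  exact ⟨fun ⟨b, hb⟩ => ⟨b, by omega⟩, fun ⟨b, hb⟩ => ⟨b, by omega⟩⟩

lemma even_card_iff_ek (u : Equiv.Perm (Fin n × ZMod 2)) :
    Even (Nat.card {i : Fin n // (i : ℕ) < k ∧ (u (i, 0)).2 = 1}) ↔ ek k u = 0 := by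
  classical
  rw [Nat.card_eq_fintype_card, Fintype.card_subtype, ek, sum_snd_eq_card,
    Finset.filter_filter, ← even_iff_cast_zero]

lemma even_card_iff_et (u : Equiv.Perm (Fin n × ZMod 2)) :
    Even (Nat.card {i : Fin n // (u (i, 0)).2 = 1}) ↔ et u = 0 := by
  classical
  have : ∑ i : Fin n, (u (i, 0)).2 = ∑ i ∈ (univ : Finset (Fin n)), (u (i, 0)).2 := rfl
  rw [Nat.card_eq_fintype_card, Fintype.card_subtype, et, this, sum_snd_eq_card,
    ← even_iff_cast_zero]

def pf (v : Equiv.Perm (Fin n × ZMod 2)) : Fin n → Fin n := fun i => (v (i, 0)).1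

lemma pf_inj {v : Equiv.Perm (Fin n × ZMod 2)} (hcv : C1 v) : Function.Injective (pf v) := by
  intro i1 i2 h
  have e1 : v (i1, 0) = (pf v i1, (v (i1, 0)).2) := rfl
  have e2 : v (i2, 0) = (pf v i2, (v (i2, 0)).2) := rfl
  have key : ∀ j1 j2 : Fin n, pf v j1 = pf v j2 → (v (j1, 0)).2 = 0 → (v (j2, 0)).2 = 1 → False := by
    intro j1 j2 hj hj1 hj2
    have hv2 : v (j2, 0) = negP (v (j1, 0)) := by
      have f1 : v (j1, 0) = (pf v j1, (v (j1, 0)).2) := rfl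
      have f2 : v (j2, 0) = (pf v j2, (v (j2, 0)).2) := rfl
      rw [f1, f2, hj, hj1, hj2, negP_apply]
      simp
    rw [← hcv (j1, 0)] at hv2
    have h2 := congrArg Prod.snd (v.injective hv2)
    simp only [negP_apply] at h2
    exact absurd h2 (by decide)
  rcases zcases ((v (i1, 0)).2) with h1 | h1 <;> rcases zcases ((v (i2, 0)).2) with h2 | h2
  · have he : v (i1, 0) = v (i2, 0) := by rw [e1, e2, h, h1, h2]
    exact congrArg Prod.fst (v.injective he)
  · exact absurd (key i1 i2 h h1 h2) (by simp)
  · exact absurd (key i2 i1 h.symm h2 h1) (by simp)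
  · have he : v (i1, 0) = v (i2, 0) := by rw [e1, e2, h, h1, h2]
    exact congrArg Prod.fst (v.injective he)

lemma sum_pf (v : Equiv.Perm (Fin n × ZMod 2)) (hcv : C1 v) (g : Fin n → ZMod 2)
    (s : Finset (Fin n)) (hmaps : ∀ i ∈ s, pf v i ∈ s) :
    ∑ i ∈ s, g (pf v i) = ∑ i ∈ s, g i := by
  classical
  have h1 : ∑ i ∈ s.image (pf v), g i = ∑ i ∈ s, g (pf v i) :=
    Finset.sum_image (fun x _ y _ h => pf_inj hcv h)
  rw [← h1]
  congr 1
  apply Finset.eq_of_subset_of_card_le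
  · intro j hj
    simp only [Finset.mem_image] at hj
    obtain ⟨i, hi, rfl⟩ := hj
    exact hmaps i hi
  · rw [Finset.card_image_of_injective _ (pf_inj hcv)]

lemma mul_snd (u v : Equiv.Perm (Fin n × ZMod 2)) (hcu : C1 u) (i : Fin n) :
    ((u * v) (i, 0)).2 = (u (pf v i, 0)).2 + (v (i, 0)).2 := by
  have : (u * v) (i, 0) = u (v (i, 0)) := rfl
  rw [this]
  have hv : v (i, 0) = (pf v i, (v (i, 0)).2) := rfl
  rw [hv, hcu.apply_snd]

lemma ek_mul (u v : Equiv.Perm (Fin n × ZMod 2)) (hcu : C1 u) (hcv : C1 v)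
    (hbv : PresB k v) : ek k (u * v) = ek k u + ek k v := by
  classical
  unfold ek
  have hmaps : ∀ i ∈ univ.filter (fun i : Fin n => (i : ℕ) < k),
      pf v i ∈ univ.filter (fun i : Fin n => (i : ℕ) < k) := by
    intro i hi
    simp only [Finset.mem_filter, Finset.mem_univ, true_and] at hi ⊢
    exact (hbv (i, 0)).mpr hi
  calc ∑ i ∈ univ.filter (fun i : Fin n => (i : ℕ) < k), ((u * v) (i, 0)).2
      = ∑ i ∈ univ.filter (fun i : Fin n => (i : ℕ) < k),
          ((u (pf v i, 0)).2 + (v (i, 0)).2) :=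
        Finset.sum_congr rfl (fun i _ => mul_snd u v hcu i)
    _ = (∑ i ∈ univ.filter (fun i : Fin n => (i : ℕ) < k), (u (pf v i, 0)).2)
        + ∑ i ∈ univ.filter (fun i : Fin n => (i : ℕ) < k), (v (i, 0)).2 :=
        Finset.sum_add_distrib
    _ = _ := by rw [sum_pf v hcv (fun j => (u (j, 0)).2) _ hmaps]

lemma et_mul (u v : Equiv.Perm (Fin n × ZMod 2)) (hcu : C1 u) (hcv : C1 v) :
    et (u * v) = et u + et v := by
  classical
  unfold et
  calc ∑ i : Fin n, ((u * v) (i, 0)).2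
      = ∑ i : Fin n, ((u (pf v i, 0)).2 + (v (i, 0)).2) :=
        Finset.sum_congr rfl (fun i _ => mul_snd u v hcu i)
    _ = (∑ i : Fin n, (u (pf v i, 0)).2) + ∑ i : Fin n, (v (i, 0)).2 :=
        Finset.sum_add_distrib
    _ = _ := by rw [sum_pf v hcv (fun j => (u (j, 0)).2) _ (fun i _ => Finset.mem_univ _)]

lemma ek_one : ek (n := n) k 1 = 0 := by
  unfold ek
  apply Finset.sum_eq_zero
  intro i _
  rfl

lemma z2_cancel {a b : ZMod 2} (h : a + b = 0) : a = b := by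
  rcases zcases a with ha | ha <;> rcases zcases b with hb | hb <;>
    subst ha <;> subst hb <;> first | rfl | (exfalso; exact absurd h (by decide))

lemma et_one : et (n := n) (1 : Equiv.Perm (Fin n × ZMod 2)) = 0 := by
  unfold et
  apply Finset.sum_eq_zero
  intro i _
  rfl

lemma et_inv (u : Equiv.Perm (Fin n × ZMod 2)) (hcu : C1 u) : et u⁻¹ = et u := by
  have h := et_mul u⁻¹ u hcu.inv hcu
  rw [inv_mul_cancel, et_one] at h
  exact z2_cancel h.symm

lemma ek_inv (u : Equiv.Perm (Fin n × ZMod 2)) (hcu : C1 u) (hbu : PresB k u) :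
    ek k u⁻¹ = ek k u := by
  have h := ek_mul (k := k) u⁻¹ u hcu.inv hcu hbu
  rw [inv_mul_cancel, ek_one] at h
  exact z2_cancel h.symm

lemma pow_apply_zero (w : Equiv.Perm (Fin n × ZMod 2)) (hcw : C1 w) (t : ℕ) (i : Fin n) :
    (w ^ t) (i, 0) = ((pf w)^[t] i, ∑ r ∈ Finset.range t, (w ((pf w)^[r] i, 0)).2) := by
  induction t with
  | zero => simp
  | succ t ih =>
    rw [pow_succ', Equiv.Perm.mul_apply, ih, hcw.apply_snd, Finset.sum_range_succ,
      Function.iterate_succ_apply']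
    exact Prod.ext rfl (add_comm _ _)

lemma iterate_mul_self {f : Fin n → Fin n} {x : Fin n} {c : ℕ} (hc : f^[c] x = x) :
    ∀ q : ℕ, f^[c * q] x = x := by
  intro q
  induction q with
  | zero => simp
  | succ q ih =>
    rw [Nat.mul_succ, Function.iterate_add_apply, hc, ih]

lemma sum_period (f : Fin n → Fin n) (g : Fin n → ZMod 2) (x : Fin n) (c : ℕ)
    (hc : f^[c] x = x) (q : ℕ) :
    ∑ r ∈ Finset.range (c * q), g (f^[r] x) = q • (∑ r ∈ Finset.range c, g (f^[r] x)) := by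
  induction q with
  | zero => simp
  | succ q ih =>
    rw [Nat.mul_succ, Finset.sum_range_add, ih, succ_nsmul]
    congr 1
    apply Finset.sum_congr rfl
    intro r _
    congr 1
    rw [Nat.add_comm, Function.iterate_add_apply, iterate_mul_self hc q]

lemma odd_cast {m : ℕ} (hm : Odd m) : (m : ZMod 2) = 1 := by
  rcases hm with ⟨t, rfl⟩
  push_cast
  rw [show ((2 : ZMod 2)) = 0 by decide]
  ring

def nuf (n k : ℕ) : (Fin n × ZMod 2) → (Fin n × ZMod 2) :=
  fun p => if k ≤ (p.1 : ℕ) then negP p else p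

lemma nuf_invol : Function.Involutive (nuf n k) := by
  intro p
  unfold nuf
  by_cases h : k ≤ (p.1 : ℕ)
  · rw [if_pos h, if_pos (by rw [negP_apply]; exact h), negP_negP]
  · rw [if_neg h, if_neg h]

def nu (n k : ℕ) : Equiv.Perm (Fin n × ZMod 2) := Function.Involutive.toPerm _ (nuf_invol (n := n) (k := k))

lemma nu_apply (p : Fin n × ZMod 2) : nu n k p = nuf n k p := rfl

end S14

open S14 Equiv Equiv.Perm Function Finset in
/-- Let `n = m + k`, `m` odd, `k > 0` even, and let `w ∈ W(D_n)` act on the first `k`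
points with an even number of negative cycles, all of even length, and on the last `m`
points as a single positive `m`-cycle.  Then every involution of `C_{W(D_n)}(w)` is
block-diagonal with `A`-block in `W(D_k)`; consequently the corresponding index-two
subgroup of `C_{W(D_n)}(w)` has no complement in `C_{W(D_n)}(w)`. -/
theorem stmt_14 (n m k : ℕ) (hn : n = m + k) (hm : Odd m) (hk : Even k) (hkpos : 0 < k)
    (w : Equiv.Perm (Fin n × ZMod 2))
    (hwD : inDn w)
    (hblock : ∀ (i : Fin n) (s : ZMod 2), (i : ℕ) < k → ((w (i, s)).1 : ℕ) < k)
    (hnegcyc : ∀ i : Fin n, (i : ℕ) < k → w.SameCycle (i, (0 : ZMod 2)) (i, (1 : ZMod 2)))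
    (hevenlen : ∀ i : Fin n, (i : ℕ) < k → 4 ∣ (w.cycleOf (i, (0 : ZMod 2))).support.card)
    (hevennum : Even (Nat.card {c : Equiv.Perm (Fin n × ZMod 2) //
      c ∈ w.cycleFactorsFinset ∧ ∃ i : Fin n, (i : ℕ) < k ∧ c (i, (0 : ZMod 2)) ≠ (i, 0)}))
    (honecyc : ∀ i j : Fin n, k ≤ (i : ℕ) → k ≤ (j : ℕ) →
      (w.SameCycle (i, (0 : ZMod 2)) (j, (0 : ZMod 2)) ∨
        w.SameCycle (i, (0 : ZMod 2)) (j, (1 : ZMod 2))))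
    (hposcyc : ∀ i : Fin n, k ≤ (i : ℕ) →
      ¬ w.SameCycle (i, (0 : ZMod 2)) (i, (1 : ZMod 2))) :
    (∀ u : Equiv.Perm (Fin n × ZMod 2),
      inDn u → u * w = w * u → u * u = 1 → blockDk k u) ∧
    (Nat.card {u : Equiv.Perm (Fin n × ZMod 2) // inDn u ∧ u * w = w * u} =
      2 * Nat.card {u : Equiv.Perm (Fin n × ZMod 2) //
        (inDn u ∧ u * w = w * u) ∧ blockDk k u}) ∧
    ¬ ∃ N : Subgroup (Equiv.Perm (Fin n × ZMod 2)),
      (∀ x ∈ N, inDn x ∧ x * w = w * x) ∧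
      (∀ x ∈ N, blockDk k x → x = 1) ∧
      (∀ c : Equiv.Perm (Fin n × ZMod 2), inDn c → c * w = w * c →
        ∃ h x, (inDn h ∧ h * w = w * h ∧ blockDk k h) ∧ x ∈ N ∧ c = h * x) := by
  classical
  have hcw : C1 w := hwD.1
  have hbw : PresB k w := by
    apply presB_of_into
    intro p hp
    have := hblock p.1 p.2 hp
    simpa using this
  -- negP basic group facts
  have hnn : (negP : Perm (Fin n × ZMod 2)) * negP = 1 := by
    apply Equiv.ext; intro p
    simp [Equiv.Perm.mul_apply, negP_negP]
  have hinvneg : (negP : Perm (Fin n × ZMod 2))⁻¹ = negP := inv_eq_of_mul_eq_one_right hnn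
  have hconjneg : (negP : Perm (Fin n × ZMod 2)) * w * negP⁻¹ = w := by
    rw [hinvneg]
    apply Equiv.ext; intro p
    simp only [Equiv.Perm.mul_apply]
    rw [hcw p, negP_negP]
  have hscneg : ∀ p q : Fin n × ZMod 2, w.SameCycle p q → w.SameCycle (negP p) (negP q) := by
    intro p q h
    have := h.conj (g := negP)
    rwa [hconjneg] at this
  -- every first-block point moves
  have hmove : ∀ i : Fin n, (i : ℕ) < k → ∀ s : ZMod 2, w (i, s) ≠ (i, s) := by
    intro i hi s
    have h0 : w (i, 0) ≠ (i, 0) := by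
      intro hfix
      obtain ⟨a, ha⟩ := hnegcyc i hi
      rw [Equiv.Perm.zpow_apply_eq_self_of_apply_eq_self hfix a] at ha
      have h2 : (0 : ZMod 2) = 1 := congrArg Prod.snd ha
      exact absurd h2 (by decide)
    rcases zcases s with h | h <;> subst h
    · exact h0
    · intro hfix
      apply h0
      have : w (negP (i, 1)) = negP (w (i, 1)) := hcw (i, 1)
      rw [hfix] at this
      simpa [negP_apply, add11, show (1 : ZMod 2) + 1 = 0 by decide] using this
  -- centralizing elements preserve the block
  have hcentral : ∀ u : Equiv.Perm (Fin n × ZMod 2), u * w = w * u → PresB k u := by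
    intro u hcomm
    apply presB_of_into
    intro p hp
    by_contra hq
    push_neg at hq
    have hcyc0 : w.cycleOf p = w.cycleOf (p.1, (0 : ZMod 2)) := by
      rcases zcases p.2 with h | h
      · rw [show p = (p.1, (0 : ZMod 2)) from Prod.ext rfl h]
      · rw [show p = (p.1, (1 : ZMod 2)) from Prod.ext rfl h]
        exact ((hnegcyc p.1 hp).cycleOf_eq).symm
    have hc4 : 4 ∣ (w.cycleOf p).support.card := by rw [hcyc0]; exact hevenlen p.1 hp
    have hpmem : p ∈ (w.cycleOf p).support := by
      rw [Equiv.Perm.mem_support_cycleOf_iff]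
      refine ⟨Equiv.Perm.SameCycle.refl _ _, Equiv.Perm.mem_support.mpr ?_⟩
      have := hmove p.1 hp p.2
      simpa using this
    have hnz : (w.cycleOf p).support.card ≠ 0 := by
      intro h0
      rw [Finset.card_eq_zero] at h0
      rw [h0] at hpmem
      exact absurd hpmem (Finset.notMem_empty p)
    have hconj := cycleOf_comm hcomm.symm p
    have hcard : (w.cycleOf (u p)).support.card = (w.cycleOf p).support.card := by
      rw [hconj, Equiv.Perm.support_conj, Finset.card_map]
    by_cases hfix : w (u p) = u p
    · have h1 : w.cycleOf (u p) = 1 := (Equiv.Perm.cycleOf_eq_one_iff w).mpr hfix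
      rw [h1] at hcard
      simp only [Equiv.Perm.support_one, Finset.card_empty] at hcard
      exact hnz hcard.symm
    · have hqsupp : (u p) ∈ w.support := Equiv.Perm.mem_support.mpr hfix
      have hsub : ∀ r ∈ (w.cycleOf (u p)).support,
          r.1 ∈ univ.filter (fun j : Fin n => k ≤ (j : ℕ)) := by
        intro r hr
        rw [Equiv.Perm.mem_support_cycleOf_iff] at hr
        simp only [Finset.mem_filter, Finset.mem_univ, true_and]
        by_contra hlt
        push_neg at hlt
        exact absurd hq (by have := (hbw.sameCycle hr.1).mpr hlt; omega)
      have hfib : ∀ j ∈ univ.filter (fun j : Fin n => k ≤ (j : ℕ)),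
          ((w.cycleOf (u p)).support.filter (fun r => r.1 = j)).card = 1 := by
        intro j hj
        simp only [Finset.mem_filter, Finset.mem_univ, true_and] at hj
        rw [Finset.card_eq_one]
        have hone : ∃ ε : ZMod 2, w.SameCycle (u p) (j, ε) := by
          have h0 := honecyc (u p).1 j hq hj
          rcases zcases ((u p).2) with hs | hs
          · rcases h0 with h | h
            · exact ⟨0, by rw [show u p = ((u p).1, (0 : ZMod 2)) from Prod.ext rfl hs]; exact h⟩
            · exact ⟨1, by rw [show u p = ((u p).1, (0 : ZMod 2)) from Prod.ext rfl hs]; exact h⟩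
          · rcases h0 with h | h
            · refine ⟨1, ?_⟩
              have h2 := hscneg _ _ h
              rw [negP_apply, negP_apply] at h2
              rw [show u p = ((u p).1, (1 : ZMod 2)) from Prod.ext rfl hs]
              simpa [show (0 : ZMod 2) + 1 = 1 by decide] using h2
            · refine ⟨0, ?_⟩
              have h2 := hscneg _ _ h
              rw [negP_apply, negP_apply] at h2
              rw [show u p = ((u p).1, (1 : ZMod 2)) from Prod.ext rfl hs]
              simpa [show (0 : ZMod 2) + 1 = 1 by decide,
                show (1 : ZMod 2) + 1 = 0 by decide] using h2
        obtain ⟨ε, hε⟩ := hone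
        refine ⟨(j, ε), Finset.eq_singleton_iff_unique_mem.mpr ⟨?_, ?_⟩⟩
        · exact Finset.mem_filter.mpr ⟨Equiv.Perm.mem_support_cycleOf_iff.mpr ⟨hε, hqsupp⟩, rfl⟩
        · rintro ⟨j', s'⟩ hmem
          simp only [Finset.mem_filter] at hmem
          have hj' : j' = j := hmem.2
          subst hj'
          have hsc2 : w.SameCycle (u p) (j', s') :=
            (Equiv.Perm.mem_support_cycleOf_iff.mp hmem.1).1
          have hscc : w.SameCycle (j', ε) (j', s') := hε.symm.trans hsc2
          have : s' = ε := by
            by_contra hne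
            rcases zcases ε with he | he <;> rcases zcases s' with hs | hs <;>
              subst he <;> subst hs
            · exact hne rfl
            · exact hposcyc j' hj hscc
            · exact hposcyc j' hj hscc.symm
            · exact hne rfl
          rw [this]
      have hcount := Finset.card_eq_sum_card_fiberwise hsub
      rw [Finset.sum_congr rfl hfib, Finset.sum_const, smul_eq_mul, mul_one] at hcount
      have htcard : (univ.filter (fun j : Fin n => k ≤ (j : ℕ))).card = m := by
        have hlt1 : ∀ j : Fin n, j ∈ univ.filter (fun j : Fin n => k ≤ (j : ℕ)) →
            (j : ℕ) - k < m := by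
          intro j hj
          simp only [Finset.mem_filter, Finset.mem_univ, true_and] at hj
          have := j.isLt; omega
        have hlt2 : ∀ a : Fin m, k + (a : ℕ) < n := by
          intro a; have := a.isLt; omega
        have hbij : (univ.filter (fun j : Fin n => k ≤ (j : ℕ))).card
            = (univ : Finset (Fin m)).card := by
          refine Finset.card_bij' (fun j hj => ⟨(j : ℕ) - k, hlt1 j hj⟩)
            (fun a _ => ⟨k + (a : ℕ), hlt2 a⟩) (fun a _ => Finset.mem_univ _) ?_ ?_ ?_
          · intro a _
            simp only [Finset.mem_filter, Finset.mem_univ, true_and]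
            omega
          · intro a ha
            simp only [Finset.mem_filter, Finset.mem_univ, true_and] at ha
            apply Fin.ext
            show k + ((a : ℕ) - k) = (a : ℕ)
            omega
          · intro a _
            apply Fin.ext
            show (k + (a : ℕ)) - k = (a : ℕ)
            omega
        rw [Finset.card_univ, Fintype.card_fin] at hbij
        exact hbij
      rw [htcard] at hcount
      rcases hm with ⟨t, ht⟩
      omega
  -- part 1 : involutions are in blockDk
  have even_of_dvd : ∀ x : ℕ, 2 ∣ x → Even x := fun x ⟨b, hb⟩ => ⟨b, by omega⟩
  have part1 : ∀ u : Equiv.Perm (Fin n × ZMod 2),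
      inDn u → u * w = w * u → u * u = 1 → blockDk k u := by
    intro u huD hcomm hinv
    have hcu : C1 u := huD.1
    have hpres : PresB k u := hcentral u hcomm
    refine ⟨fun i s hi => (hpres (i, s)).mpr hi, ?_⟩
    have hu2 : ∀ p : Fin n × ZMod 2, u (u p) = p := by
      intro p
      have : (u * u) p = (1 : Equiv.Perm (Fin n × ZMod 2)) p := by rw [hinv]
      simpa using this
    have hkey : ∀ i i' : Fin n, (i : ℕ) < k → u (i, 0) = (i, 1) →
        w.SameCycle (i, (0 : ZMod 2)) (i', (0 : ZMod 2)) → u (i', 0) = (i', 1) := by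
      intro i i' hi hui hsc
      obtain ⟨a, ha⟩ := hsc
      have hcC : Commute u w := hcomm
      have hcz : u * (w ^ a) = (w ^ a) * u := hcC.zpow_right a
      have h2 : u ((w ^ a) (i, 0)) = (w ^ a) (u (i, 0)) := by
        have := congrArg (fun σ : Equiv.Perm (Fin n × ZMod 2) => σ (i, (0 : ZMod 2))) hcz
        simpa using this
      rw [← ha, h2, hui, show ((i : Fin n), (1 : ZMod 2)) = negP (i, 0) from
        Prod.ext rfl (show (1 : ZMod 2) = 0 + 1 by decide), (hcw.zpow a) (i, 0), ha, negP_apply]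
      exact Prod.ext rfl (show (0 : ZMod 2) + 1 = 1 by decide)
    set A := univ.filter (fun i : Fin n => (i : ℕ) < k ∧ (u (i, 0)).2 = 1) with hA
    set S := univ.filter (fun i : Fin n => (i : ℕ) < k ∧ u (i, 0) = (i, 1)) with hS
    have hSsubA : S ⊆ A := by
      intro i hi
      simp only [hA, hS, Finset.mem_filter, Finset.mem_univ, true_and] at *
      exact ⟨hi.1, by rw [hi.2]⟩
    have hgoal : Nat.card {i : Fin n // (i : ℕ) < k ∧ (u (i, (0 : ZMod 2))).2 = 1} = A.card := by
      rw [Nat.card_eq_fintype_card, Fintype.card_subtype]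
    rw [hgoal]
    have hSeven : Even S.card := by
      apply even_of_dvd
      have hmapsto : ∀ i ∈ S, w.cycleOf ((i : Fin n), (0 : ZMod 2))
          ∈ S.image (fun i : Fin n => w.cycleOf (i, (0 : ZMod 2))) :=
        fun i hi => Finset.mem_image_of_mem _ hi
      rw [Finset.card_eq_sum_card_fiberwise hmapsto]
      apply Finset.dvd_sum
      intro c hc
      obtain ⟨i0, hi0S, hi0c⟩ := Finset.mem_image.mp hc
      simp only [hS, Finset.mem_filter, Finset.mem_univ, true_and] at hi0S
      obtain ⟨hi0k, hi0u⟩ := hi0S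
      have hfib : S.filter (fun i : Fin n => w.cycleOf ((i : Fin n), (0 : ZMod 2)) = c)
          = univ.filter (fun i' : Fin n => w.SameCycle (i0, (0 : ZMod 2)) (i', 0)) := by
        ext i
        simp only [hS, Finset.filter_filter, Finset.mem_filter, Finset.mem_univ, true_and]
        constructor
        · rintro ⟨⟨hik, _⟩, hic⟩
          have h1 : ((i : Fin n), (0 : ZMod 2)) ∈ (w.cycleOf ((i : Fin n), (0 : ZMod 2))).support := by
            rw [Equiv.Perm.mem_support_cycleOf_iff]
            exact ⟨Equiv.Perm.SameCycle.refl _ _, Equiv.Perm.mem_support.mpr (hmove i hik 0)⟩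
          rw [hic, ← hi0c] at h1
          exact (Equiv.Perm.mem_support_cycleOf_iff.mp h1).1
        · intro hsc
          have hik : (i : ℕ) < k := (hbw.sameCycle hsc).mp hi0k
          refine ⟨⟨hik, hkey i0 i hi0k hi0u hsc⟩, ?_⟩
          rw [← hi0c]
          exact (hsc.cycleOf_eq).symm
      rw [hfib]
      have hmapsto2 : ∀ r ∈ (w.cycleOf ((i0 : Fin n), (0 : ZMod 2))).support,
          r.1 ∈ univ.filter (fun i' : Fin n => w.SameCycle (i0, (0 : ZMod 2)) (i', 0)) := by
        intro r hr
        rw [Equiv.Perm.mem_support_cycleOf_iff] at hr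
        simp only [Finset.mem_filter, Finset.mem_univ, true_and]
        rcases zcases r.2 with h | h
        · rw [show r = (r.1, (0 : ZMod 2)) from Prod.ext rfl h] at hr
          exact hr.1
        · have h1 : w.SameCycle (i0, (0 : ZMod 2)) (r.1, 1) := by
            rw [show r = (r.1, (1 : ZMod 2)) from Prod.ext rfl h] at hr
            exact hr.1
          have hrk : (r.1 : ℕ) < k := (hbw.sameCycle h1).mp hi0k
          exact h1.trans (hnegcyc r.1 hrk).symm
      have hfib2 : ∀ j ∈ univ.filter (fun i' : Fin n => w.SameCycle (i0, (0 : ZMod 2)) (i', 0)),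
          ((w.cycleOf ((i0 : Fin n), (0 : ZMod 2))).support.filter (fun r => r.1 = j)).card = 2 := by
        intro j hj
        simp only [Finset.mem_filter, Finset.mem_univ, true_and] at hj
        have hjk : (j : ℕ) < k := (hbw.sameCycle hj).mp hi0k
        have hfeq : (w.cycleOf ((i0 : Fin n), (0 : ZMod 2))).support.filter (fun r => r.1 = j)
            = {((j : Fin n), (0 : ZMod 2)), (j, 1)} := by
          ext r
          simp only [Finset.mem_filter, Finset.mem_insert, Finset.mem_singleton]
          constructor
          · rintro ⟨_, hr1⟩
            rcases zcases r.2 with h | h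
            · exact Or.inl (Prod.ext hr1 h)
            · exact Or.inr (Prod.ext hr1 h)
          · have hi0supp : ((i0 : Fin n), (0 : ZMod 2)) ∈ w.support :=
              Equiv.Perm.mem_support.mpr (hmove i0 hi0k 0)
            rintro (rfl | rfl)
            · exact ⟨Equiv.Perm.mem_support_cycleOf_iff.mpr ⟨hj, hi0supp⟩, rfl⟩
            · exact ⟨Equiv.Perm.mem_support_cycleOf_iff.mpr
                ⟨hj.trans (hnegcyc j hjk), hi0supp⟩, rfl⟩
        rw [hfeq, Finset.card_insert_of_notMem, Finset.card_singleton]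
        rw [Finset.mem_singleton]
        intro h
        exact absurd (congrArg Prod.snd h) (show ¬ ((0 : ZMod 2) = 1) by decide)
      have hsupcard := Finset.card_eq_sum_card_fiberwise hmapsto2
      rw [Finset.sum_congr rfl hfib2, Finset.sum_const, smul_eq_mul] at hsupcard
      have h4 := hevenlen i0 hi0k
      omega
    have hdiff : Even (A \ S).card := by
      have hmem' : ∀ i ∈ A \ S, ((i : ℕ) < k ∧ (u (i, (0 : ZMod 2))).2 = 1)
          ∧ u (i, 0) ≠ (i, 1) := by
        intro i hi
        rw [Finset.mem_sdiff] at hi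
        obtain ⟨hiA, hiS⟩ := hi
        simp only [hA, hS, Finset.mem_filter, Finset.mem_univ, true_and] at hiA hiS
        exact ⟨hiA, fun h => hiS ⟨hiA.1, h⟩⟩
      have hmain : ∀ i ∈ A \ S,
          u ((i : Fin n), (0 : ZMod 2)) = ((u (i, (0 : ZMod 2))).1, 1)
          ∧ u ((u (i, (0 : ZMod 2))).1, 0) = (i, 1)
          ∧ (u (i, (0 : ZMod 2))).1 ≠ i ∧ ((u (i, (0 : ZMod 2))).1 : ℕ) < k := by
        intro i hi
        obtain ⟨⟨hik, hsnd⟩, hne⟩ := hmem' i hi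
        have he1 : u ((i : Fin n), (0 : ZMod 2)) = ((u (i, (0 : ZMod 2))).1, 1) :=
          Prod.ext rfl hsnd
        have hne2 : (u ((i : Fin n), (0 : ZMod 2))).1 ≠ i := by
          intro h
          apply hne
          rw [he1, h]
        have h11 : u ((u ((i : Fin n), (0 : ZMod 2))).1, 1) = (i, 0) := by
          rw [← he1]
          exact hu2 _
        have h10 : u ((u ((i : Fin n), (0 : ZMod 2))).1, 0) = (i, 1) := by
          have happ := hcu.apply_snd (u ((i : Fin n), (0 : ZMod 2))).1 1
          rw [h11] at happ
          have hfst := congrArg Prod.fst happ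
          have hsnd2 := congrArg Prod.snd happ
          simp only [] at hfst hsnd2
          have hs0 : (u ((u ((i : Fin n), (0 : ZMod 2))).1, 0)).2 = 1 := by
            rcases zcases ((u ((u ((i : Fin n), (0 : ZMod 2))).1, 0)).2) with hz | hz
            · exfalso
              rw [hz] at hsnd2
              exact absurd hsnd2 (by decide)
            · exact hz
          exact Prod.ext hfst.symm hs0
        exact ⟨he1, h10, hne2, (hpres ((i : Fin n), (0 : ZMod 2))).mpr hik⟩
      have hsum : ∑ _i ∈ (A \ S), (1 : ZMod 2) = 0 := by
        apply Finset.sum_involution (g := fun i _ => (u ((i : Fin n), (0 : ZMod 2))).1)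
        · intro a _
          decide
        · intro a ha _
          exact (hmain a ha).2.2.1
        · intro a ha
          obtain ⟨he1, h10, hne2, hk2⟩ := hmain a ha
          rw [Finset.mem_sdiff]
          constructor
          · simp only [hA, Finset.mem_filter, Finset.mem_univ, true_and]
            exact ⟨hk2, by rw [h10]⟩
          · simp only [hS, Finset.mem_filter, Finset.mem_univ, true_and, not_and]
            intro _
            rw [h10]
            intro hcon
            exact hne2 (congrArg Prod.fst hcon).symm
        · intro a ha
          obtain ⟨he1, h10, hne2, hk2⟩ := hmain a ha
          rw [h10]
      rw [Finset.sum_const, nsmul_eq_mul, mul_one] at hsum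
      exact even_iff_cast_zero _ |>.mpr hsum
    have hsplit : A.card = (A \ S).card + S.card := (Finset.card_sdiff_add_card_eq_card hSsubA).symm
    rw [hsplit]
    exact hdiff.add hSeven
  -- blockDk in terms of ek for centralizing elements
  have hblockek : ∀ u : Equiv.Perm (Fin n × ZMod 2), u * w = w * u →
      (blockDk k u ↔ ek k u = 0) := by
    intro u hcomm
    constructor
    · intro hb
      exact (even_card_iff_ek u).mp hb.2
    · intro he
      exact ⟨fun i s hi => ((hcentral u hcomm) (i, s)).mpr hi, (even_card_iff_ek u).mpr he⟩
  -- the odd element g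
  have htail : (univ.filter (fun j : Fin n => k ≤ (j : ℕ))).card = m := by
    have hlt1 : ∀ j : Fin n, j ∈ univ.filter (fun j : Fin n => k ≤ (j : ℕ)) →
        (j : ℕ) - k < m := by
      intro j hj
      simp only [Finset.mem_filter, Finset.mem_univ, true_and] at hj
      have := j.isLt; omega
    have hlt2 : ∀ a : Fin m, k + (a : ℕ) < n := by
      intro a; have := a.isLt; omega
    have hbij : (univ.filter (fun j : Fin n => k ≤ (j : ℕ))).card
        = (univ : Finset (Fin m)).card := by
      refine Finset.card_bij' (fun j hj => ⟨(j : ℕ) - k, hlt1 j hj⟩)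
        (fun a _ => ⟨k + (a : ℕ), hlt2 a⟩) (fun a _ => Finset.mem_univ _) ?_ ?_ ?_
      · intro a _
        simp only [Finset.mem_filter, Finset.mem_univ, true_and]
        omega
      · intro a ha
        simp only [Finset.mem_filter, Finset.mem_univ, true_and] at ha
        apply Fin.ext
        show k + ((a : ℕ) - k) = (a : ℕ)
        omega
      · intro a _
        apply Fin.ext
        show (k + (a : ℕ)) - k = (a : ℕ)
        omega
    rw [Finset.card_univ, Fintype.card_fin] at hbij
    exact hbij
  obtain ⟨g, hgC1, hgcomm, hgpres, hgek, hget⟩ :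
      ∃ g : Equiv.Perm (Fin n × ZMod 2), C1 g ∧ g * w = w * g ∧ PresB k g ∧
        ek k g = 1 ∧ et g = 0 := by
    set i0 : Fin n := ⟨0, by omega⟩ with hi0
    have hi0k : ((i0 : Fin n) : ℕ) < k := hkpos
    set c0 := w.cycleOf ((i0 : Fin n), (0 : ZMod 2)) with hc0
    have hneg0 : negP ((i0 : Fin n), (0 : ZMod 2)) = ((i0 : Fin n), (1 : ZMod 2)) :=
      Prod.ext rfl (show (0 : ZMod 2) + 1 = 1 by decide)
    have hc0w : c0 * w = w * c0 := by
      apply Equiv.ext; intro q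
      simp only [Equiv.Perm.mul_apply, hc0, Equiv.Perm.cycleOf_apply]
      by_cases hsc : w.SameCycle ((i0 : Fin n), (0 : ZMod 2)) q
      · rw [if_pos hsc, if_pos (Equiv.Perm.sameCycle_apply_right.mpr hsc)]
      · rw [if_neg hsc, if_neg (fun hh => hsc (Equiv.Perm.sameCycle_apply_right.mp hh))]
    have hc0C1 : C1 c0 := by
      intro p
      rw [hc0, Equiv.Perm.cycleOf_apply, Equiv.Perm.cycleOf_apply]
      have hiff : w.SameCycle ((i0 : Fin n), (0 : ZMod 2)) (negP p)
          ↔ w.SameCycle ((i0 : Fin n), (0 : ZMod 2)) p := by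
        constructor
        · intro h
          have h2 := hscneg _ _ h
          rw [negP_negP, hneg0] at h2
          exact (hnegcyc i0 hi0k).trans h2
        · intro h
          have h2 := hscneg _ _ h
          rw [hneg0] at h2
          exact (hnegcyc i0 hi0k).trans h2
      by_cases h : w.SameCycle ((i0 : Fin n), (0 : ZMod 2)) p
      · rw [if_pos (hiff.mpr h), if_pos h]
        exact hcw p
      · rw [if_neg (fun hh => h (hiff.mp hh)), if_neg h]
    have hc0pres : PresB k c0 := by
      apply presB_of_into
      intro p hp
      rw [hc0, Equiv.Perm.cycleOf_apply]
      by_cases h : w.SameCycle ((i0 : Fin n), (0 : ZMod 2)) p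
      · rw [if_pos h]; exact (hbw p).mpr hp
      · rw [if_neg h]; exact hp
    have hnuC1 : C1 (nu n k) := by
      intro p
      rw [nu_apply, nu_apply]
      unfold nuf
      by_cases h : k ≤ ((p.1 : Fin n) : ℕ)
      · rw [if_pos (show k ≤ (((negP p).1 : Fin n) : ℕ) from h), if_pos h]
      · rw [if_neg (show ¬ k ≤ (((negP p).1 : Fin n) : ℕ) from h), if_neg h]
    have hnuw : (nu n k) * w = w * (nu n k) := by
      apply Equiv.ext; intro p
      simp only [Equiv.Perm.mul_apply, nu_apply]
      unfold nuf
      by_cases h : k ≤ ((p.1 : Fin n) : ℕ)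
      · have h2 : k ≤ (((w p).1 : Fin n) : ℕ) := by
          have := hbw p; omega
        rw [if_pos h2, if_pos h, hcw p]
      · have h2 : ¬ k ≤ (((w p).1 : Fin n) : ℕ) := by
          have := hbw p; omega
        rw [if_neg h2, if_neg h]
    have hnupres : PresB k (nu n k) := by
      apply presB_of_into
      intro p hp
      rw [nu_apply]
      unfold nuf
      rw [if_neg (by omega)]
      exact hp
    have heknu : ek k (nu n k) = 0 := by
      apply Finset.sum_eq_zero
      intro i hi
      simp only [Finset.mem_filter, Finset.mem_univ, true_and] at hi
      rw [nu_apply]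
      unfold nuf
      rw [if_neg (show ¬ k ≤ ((i : Fin n) : ℕ) from by omega)]
    have hetnu : et (nu n k) = 1 := by
      unfold et
      have hterm : ∀ i : Fin n, ((nu n k) (i, (0 : ZMod 2))).2
          = if k ≤ (i : ℕ) then (1 : ZMod 2) else 0 := by
        intro i
        rw [nu_apply]
        unfold nuf
        by_cases h : k ≤ (i : ℕ)
        · rw [if_pos (show k ≤ (((i, (0:ZMod 2)).1 : Fin n) : ℕ) from h), if_pos h, negP_apply]
          exact (by decide : (0 : ZMod 2) + 1 = 1)
        · rw [if_neg (show ¬ k ≤ (((i, (0:ZMod 2)).1 : Fin n) : ℕ) from h), if_neg h]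
      rw [Finset.sum_congr rfl (fun i _ => hterm i), Finset.sum_boole, htail]
      exact odd_cast hm
    have hekc0 : ek k c0 = 1 := by
      set f := pf w with hf
      set sg : Fin n → ZMod 2 := fun i => (w (i, (0 : ZMod 2))).2 with hsg
      have hterm : ∀ i : Fin n, (c0 (i, (0 : ZMod 2))).2
          = if w.SameCycle ((i0 : Fin n), (0 : ZMod 2)) (i, 0) then sg i else 0 := by
        intro i
        rw [hc0, Equiv.Perm.cycleOf_apply]
        by_cases h : w.SameCycle ((i0 : Fin n), (0 : ZMod 2)) (i, 0)
        · rw [if_pos h, if_pos h]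
        · rw [if_neg h, if_neg h]
      have h1 : ek k c0 = ∑ i ∈ univ.filter
          (fun i' : Fin n => w.SameCycle ((i0 : Fin n), (0 : ZMod 2)) (i', 0)), sg i := by
        unfold ek
        rw [Finset.sum_congr rfl (fun i _ => hterm i), ← Finset.sum_filter,
          Finset.filter_filter]
        congr 1
        ext i
        simp only [Finset.mem_filter, Finset.mem_univ, true_and]
        constructor
        · rintro ⟨_, h⟩; exact h
        · intro h; exact ⟨(hbw.sameCycle h).mp hi0k, h⟩
      obtain ⟨d, hdpos, _, hd⟩ := Equiv.Perm.SameCycle.exists_pow_eq w (hnegcyc i0 hi0k)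
      have hiter : ∀ t : ℕ, (w ^ t) ((i0 : Fin n), (0 : ZMod 2))
          = (f^[t] i0, ∑ r ∈ Finset.range t, sg (f^[r] i0)) :=
        fun t => pow_apply_zero w hcw t i0
      have hfd : f^[d] i0 = i0 := by
        have h2 := hiter d; rw [hd] at h2; exact (congrArg Prod.fst h2).symm
      have hsd : ∑ r ∈ Finset.range d, sg (f^[r] i0) = 1 := by
        have h2 := hiter d; rw [hd] at h2; exact (congrArg Prod.snd h2).symm
      have hper : Function.IsPeriodicPt f d i0 := hfd
      have hcd : Function.minimalPeriod f i0 ∣ d := hper.minimalPeriod_dvd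
      have hcpos : 0 < Function.minimalPeriod f i0 := hper.minimalPeriod_pos hdpos
      have hfc : f^[Function.minimalPeriod f i0] i0 = i0 := Function.iterate_minimalPeriod
      obtain ⟨q, hq⟩ := hcd
      have hsum2 : (1 : ZMod 2)
          = q • (∑ r ∈ Finset.range (Function.minimalPeriod f i0), sg (f^[r] i0)) := by
        rw [← hsd, hq, sum_period f sg i0 _ hfc q]
      have hS1 : ∑ r ∈ Finset.range (Function.minimalPeriod f i0), sg (f^[r] i0) = 1 := by
        rcases zcases (∑ r ∈ Finset.range (Function.minimalPeriod f i0), sg (f^[r] i0)) with h | h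
        · exfalso; rw [h, smul_zero] at hsum2; exact absurd hsum2 (by decide)
        · exact h
      have himg : univ.filter
          (fun i' : Fin n => w.SameCycle ((i0 : Fin n), (0 : ZMod 2)) (i', 0))
          = (Finset.range (Function.minimalPeriod f i0)).image (fun r => f^[r] i0) := by
        ext i
        simp only [Finset.mem_filter, Finset.mem_univ, true_and, Finset.mem_image,
          Finset.mem_range]
        constructor
        · intro hsc
          obtain ⟨t, _, _, ht⟩ := Equiv.Perm.SameCycle.exists_pow_eq w hsc
          have hft : f^[t] i0 = i := by
            have h2 := hiter t; rw [ht] at h2; exact (congrArg Prod.fst h2).symm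
          refine ⟨t % Function.minimalPeriod f i0, Nat.mod_lt _ hcpos, ?_⟩
          rw [← hft]
          conv_rhs => rw [show t = t % Function.minimalPeriod f i0
            + Function.minimalPeriod f i0 * (t / Function.minimalPeriod f i0) from
            (Nat.mod_add_div t (Function.minimalPeriod f i0)).symm]
          rw [Function.iterate_add_apply, iterate_mul_self hfc]
        · rintro ⟨r, _, rfl⟩
          have h1 : w.SameCycle ((i0 : Fin n), (0 : ZMod 2))
              (f^[r] i0, ∑ r' ∈ Finset.range r, sg (f^[r'] i0)) :=
            ⟨(r : ℤ), by rw [zpow_natCast, hiter r]⟩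
          rcases zcases (∑ r' ∈ Finset.range r, sg (f^[r'] i0)) with h | h
          · rw [h] at h1; exact h1
          · rw [h] at h1
            have hrk : ((f^[r] i0 : Fin n) : ℕ) < k := (hbw.sameCycle h1).mp hi0k
            exact h1.trans (hnegcyc _ hrk).symm
      rw [h1, himg, Finset.sum_image (fun x hx y hy hxy =>
        Function.iterate_injOn_Iio_minimalPeriod (Finset.mem_range.mp hx)
          (Finset.mem_range.mp hy) hxy)]
      exact hS1
    have hetc0 : et c0 = 1 := by
      unfold et
      have hsplit := Finset.sum_filter_add_sum_filter_not (univ : Finset (Fin n))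
        (fun i : Fin n => (i : ℕ) < k) (fun i : Fin n => (c0 (i, (0 : ZMod 2))).2)
      rw [← hsplit]
      have h2 : ∑ i ∈ univ.filter (fun i : Fin n => ¬ (i : ℕ) < k),
          (c0 (i, (0 : ZMod 2))).2 = 0 := by
        apply Finset.sum_eq_zero
        intro i hi
        simp only [Finset.mem_filter, Finset.mem_univ, true_and, not_lt] at hi
        rw [hc0, Equiv.Perm.cycleOf_apply, if_neg]
        intro hsc
        have h3 : ((i : Fin n) : ℕ) < k := (hbw.sameCycle hsc).mp hi0k
        omega
      rw [h2, add_zero]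
      exact hekc0
    refine ⟨c0 * nu n k, hc0C1.mul hnuC1, ?_, hc0pres.mul hnupres, ?_, ?_⟩
    · rw [mul_assoc, hnuw, ← mul_assoc, hc0w, mul_assoc]
    · rw [ek_mul c0 (nu n k) hc0C1 hnuC1 hnupres, hekc0, heknu, add_zero]
    · rw [et_mul c0 (nu n k) hc0C1 hnuC1, hetc0, hetnu]
      decide
  have hginD : inDn g := ⟨hgC1, (even_card_iff_et g).mpr hget⟩
  -- part 2
  have hginv : g⁻¹ * w = w * g⁻¹ := by
    have hcC : Commute g w := hgcomm
    exact hcC.inv_left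
  have part2 : Nat.card {u : Equiv.Perm (Fin n × ZMod 2) // inDn u ∧ u * w = w * u} =
      2 * Nat.card {u : Equiv.Perm (Fin n × ZMod 2) //
        (inDn u ∧ u * w = w * u) ∧ blockDk k u} := by
    rw [Nat.card_eq_fintype_card, Fintype.card_subtype,
      Nat.card_eq_fintype_card, Fintype.card_subtype]
    have hpredeq : univ.filter (fun u : Equiv.Perm (Fin n × ZMod 2) =>
          (inDn u ∧ u * w = w * u) ∧ blockDk k u)
        = univ.filter (fun u : Equiv.Perm (Fin n × ZMod 2) =>
          (inDn u ∧ u * w = w * u) ∧ ek k u = 0) := by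
      ext u
      simp only [Finset.mem_filter, Finset.mem_univ, true_and]
      constructor
      · rintro ⟨⟨h1, h2⟩, h3⟩
        exact ⟨⟨h1, h2⟩, (hblockek u h2).mp h3⟩
      · rintro ⟨⟨h1, h2⟩, h3⟩
        exact ⟨⟨h1, h2⟩, (hblockek u h2).mpr h3⟩
    rw [hpredeq]
    have hsplit := Finset.card_filter_add_card_filter_not
      (s := univ.filter (fun u : Equiv.Perm (Fin n × ZMod 2) => inDn u ∧ u * w = w * u))
      (p := fun u => ek k u = 0)
    rw [Finset.filter_filter, Finset.filter_filter] at hsplit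
    have hne : univ.filter (fun u : Equiv.Perm (Fin n × ZMod 2) =>
          (inDn u ∧ u * w = w * u) ∧ ¬ ek k u = 0)
        = univ.filter (fun u : Equiv.Perm (Fin n × ZMod 2) =>
          (inDn u ∧ u * w = w * u) ∧ ek k u = 1) := by
      ext u
      simp only [Finset.mem_filter, Finset.mem_univ, true_and]
      constructor
      · rintro ⟨h1, h2⟩
        rcases zcases (ek k u) with h | h
        · exact absurd h h2
        · exact ⟨h1, h⟩
      · rintro ⟨h1, h2⟩
        exact ⟨h1, by rw [h2]; decide⟩
    rw [hne] at hsplit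
    have hmemtrans : ∀ (u g' : Equiv.Perm (Fin n × ZMod 2)), C1 g' → g' * w = w * g' →
        PresB k g' → et g' = 0 → (inDn u ∧ u * w = w * u) → inDn (u * g') ∧ (u * g') * w = w * (u * g') := by
      intro u g' hg'C1 hg'comm hg'pres hg'et ⟨huD, hucomm⟩
      refine ⟨⟨S14.C1.mul huD.1 hg'C1, ?_⟩, ?_⟩
      · apply (even_card_iff_et _).mpr
        rw [et_mul u g' huD.1 hg'C1, hg'et, add_zero]
        exact (even_card_iff_et u).mp huD.2
      · rw [mul_assoc, hg'comm, ← mul_assoc, hucomm, mul_assoc]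
    have hbijc : (univ.filter (fun u : Equiv.Perm (Fin n × ZMod 2) =>
          (inDn u ∧ u * w = w * u) ∧ ek k u = 0)).card
        = (univ.filter (fun u : Equiv.Perm (Fin n × ZMod 2) =>
          (inDn u ∧ u * w = w * u) ∧ ek k u = 1)).card := by
      refine Finset.card_bij' (fun u _ => u * g) (fun u _ => u * g⁻¹) ?_ ?_ ?_ ?_
      · intro u hu
        simp only [Finset.mem_filter, Finset.mem_univ, true_and] at hu ⊢
        obtain ⟨hP, hek0⟩ := hu
        refine ⟨hmemtrans u g hgC1 hgcomm hgpres hget hP, ?_⟩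
        rw [ek_mul u g hP.1.1 hgC1 hgpres, hek0, hgek, zero_add]
      · intro u hu
        simp only [Finset.mem_filter, Finset.mem_univ, true_and] at hu ⊢
        obtain ⟨hP, hek1⟩ := hu
        refine ⟨hmemtrans u g⁻¹ hgC1.inv hginv hgpres.inv
          (by rw [et_inv g hgC1]; exact hget) hP, ?_⟩
        rw [ek_mul u g⁻¹ hP.1.1 hgC1.inv hgpres.inv, hek1, ek_inv g hgC1 hgpres, hgek]
        decide
      · intro u _
        show u * g * g⁻¹ = u
        rw [mul_assoc, mul_inv_cancel, mul_one]
      · intro u _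
        show u * g⁻¹ * g = u
        rw [mul_assoc, inv_mul_cancel, mul_one]
    omega
  refine ⟨part1, part2, ?_⟩
  rintro ⟨N, hN1, hN2, hN3⟩
  have hNtriv : ∀ x ∈ N, x = 1 := by
    intro x hx
    obtain ⟨hxD, hxcomm⟩ := hN1 x hx
    have hekx : ek k x = 0 := by
      by_contra hne
      have hek1 : ek k x = 1 := by
        rcases zcases (ek k x) with h | h
        · exact absurd h hne
        · exact h
      have hx2 : x * x ∈ N := N.mul_mem hx hx
      obtain ⟨_, hx2comm⟩ := hN1 _ hx2
      have hek2 : ek k (x * x) = 0 := by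
        rw [ek_mul x x hxD.1 hxD.1 (hcentral x hxcomm), hek1]
        decide
      have hxx1 : x * x = 1 := hN2 _ hx2 ((hblockek _ hx2comm).mpr hek2)
      have hxb : blockDk k x := part1 x hxD hxcomm hxx1
      exact hne ((hblockek x hxcomm).mp hxb)
    exact hN2 x hx ((hblockek x hxcomm).mpr hekx)
  have hgb : blockDk k g := by
    obtain ⟨h, x, ⟨hhD, hhcomm, hhb⟩, hxN, hgx⟩ := hN3 g hginD hgcomm
    rw [hgx, hNtriv x hxN, mul_one]
    exact hhb
  have : ek k g = 0 := (hblockek g hgcomm).mp hgb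
  rw [hgek] at this
  exact absurd this (by decide)
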